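/- Strong data processing inequality: let U, X, Y be random variables taking values in finite sets forming a Markov chain U → X → Y, where the conditional law of Y given X is given by a channel K (i.e., Y is conditionally independent of U given X, and P(Y = y | X = x) = K(x,y)). Then the mutual information satisfies I(U; Y) ≤ η_KL(K) · I(U; X). -/

import Mathlib

/-- Kullback–Leibler divergence between two distributions on a finite alphabet. -/
noncomputable def klDiv {X : Type*} [Fintype X] (P Q : X → ℝ) : ℝ :=
  ∑ x, P x * Real.log (P x / Q x)

/-- `P` is a probability distribution on the finite alphabet `X`. -/
def IsProbDist {X : Type*} [Fintype X] (P : X → ℝ) : Prop :=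
  (∀ x, 0 ≤ P x) ∧ ∑ x, P x = 1

/-- `K` is a channel (Markov kernel) from `X` to `Y`. -/
def IsChannel {X Y : Type*} [Fintype Y] (K : X → Y → ℝ) : Prop :=
  (∀ x y, 0 ≤ K x y) ∧ ∀ x, ∑ y, K x y = 1

/-- Pushforward `K ∘ P` of a distribution `P` through a channel `K`. -/
noncomputable def pushforward {X Y : Type*} [Fintype X] (K : X → Y → ℝ) (P : X → ℝ) :
    Y → ℝ := fun y => ∑ x, P x * K x y

/-- The Kullback–Leibler contraction coefficient of a channel `K`. -/
noncomputable def etaKL {X Y : Type*} [Fintype X] [Fintype Y] (K : X → Y → ℝ) : ℝ :=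
  sSup {r : ℝ | ∃ P Q : X → ℝ, IsProbDist P ∧ IsProbDist Q ∧
    (∀ x, Q x = 0 → P x = 0) ∧ 0 < klDiv P Q ∧
    r = klDiv (pushforward K P) (pushforward K Q) / klDiv P Q}

/-- Mutual information of a joint distribution `J` on `A × B`: the KL divergence
between the joint law and the product of its marginals. -/
noncomputable def mutInfo {A B : Type*} [Fintype A] [Fintype B] (J : A × B → ℝ) : ℝ :=
  klDiv J (fun p => (∑ b, J (p.1, b)) * (∑ a, J (a, p.2)))

lemma log_sum_ineq {ι : Type*} [Fintype ι] (a b : ι → ℝ)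
    (ha : ∀ i, 0 ≤ a i) (hb : ∀ i, 0 ≤ b i) (hab : ∀ i, b i = 0 → a i = 0) :
    (∑ i, a i) * Real.log ((∑ i, a i) / (∑ i, b i)) ≤ ∑ i, a i * Real.log (a i / b i) := by
  set A := ∑ i, a i with hA
  set B := ∑ i, b i with hB
  rcases eq_or_lt_of_le (Finset.sum_nonneg (fun i _ => ha i) : (0:ℝ) ≤ A) with h0 | hApos
  · have hz := (Finset.sum_eq_zero_iff_of_nonneg (fun i _ => ha i)).mp h0.symm
    have : ∀ i ∈ Finset.univ, a i * Real.log (a i / b i) = 0 := by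
      intro i hi; rw [hz i hi]; ring
    have hA0 : A = 0 := by rw [hA, ← h0]
    rw [Finset.sum_eq_zero this, hA0, zero_mul]
  · have hBpos : 0 < B := by
      rcases eq_or_lt_of_le (Finset.sum_nonneg (fun i _ => hb i) : (0:ℝ) ≤ B) with h0 | h
      · exfalso
        have hz := (Finset.sum_eq_zero_iff_of_nonneg (fun i _ => hb i)).mp h0.symm
        have : A = 0 := Finset.sum_eq_zero (fun i hi => hab i (hz i hi))
        linarith
      · exact h
    have key : A * Real.log (A / B) = ∑ i, (a i * Real.log (A / B) + (a i - b i * (A / B))) := by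
      rw [Finset.sum_add_distrib, Finset.sum_sub_distrib, ← Finset.sum_mul, ← Finset.sum_mul,
        ← hA, ← hB]
      have : B * (A / B) = A := by field_simp
      linarith [this]
    rw [key]
    apply Finset.sum_le_sum
    intro i _
    rcases eq_or_lt_of_le (ha i) with h0 | hai
    · rw [← h0]
      have : 0 ≤ b i * (A / B) := mul_nonneg (hb i) (div_nonneg hApos.le hBpos.le)
      simp only [zero_mul, zero_sub, zero_add]
      linarith
    · have hbne : b i ≠ 0 := by
        intro e; rw [hab i e] at hai; exact lt_irrefl 0 hai
      have hbi : 0 < b i := lt_of_le_of_ne (hb i) (Ne.symm hbne)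
      have key2 : Real.log (b i * A / (a i * B)) ≤ b i * A / (a i * B) - 1 :=
        Real.log_le_sub_one_of_pos (by positivity)
      have hlog : Real.log (b i * A / (a i * B)) = Real.log (A / B) - Real.log (a i / b i) := by
        rw [Real.log_div (mul_pos hbi hApos).ne' (mul_pos hai hBpos).ne',
          Real.log_div hApos.ne' hBpos.ne', Real.log_div hai.ne' hbi.ne',
          Real.log_mul hbi.ne' hApos.ne', Real.log_mul hai.ne' hBpos.ne']
        ring
      rw [hlog] at key2
      have h3 := mul_le_mul_of_nonneg_left key2 hai.le
      have h2 : a i * (b i * A / (a i * B)) = b i * (A / B) := by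
        field_simp
      nlinarith [h3, h2]

lemma dpi {X Y : Type*} [Fintype X] [Fintype Y] (K : X → Y → ℝ) (hK : IsChannel K)
    (P Q : X → ℝ) (hP : ∀ x, 0 ≤ P x) (hQ : ∀ x, 0 ≤ Q x)
    (habs : ∀ x, Q x = 0 → P x = 0) :
    klDiv (pushforward K P) (pushforward K Q) ≤ klDiv P Q := by
  unfold klDiv pushforward
  have step1 : ∀ y, (∑ x, P x * K x y) * Real.log ((∑ x, P x * K x y) / (∑ x, Q x * K x y))
      ≤ ∑ x, (P x * K x y) * Real.log (P x / Q x) := by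
    intro y
    have h := log_sum_ineq (fun x => P x * K x y) (fun x => Q x * K x y)
      (fun x => mul_nonneg (hP x) (hK.1 x y)) (fun x => mul_nonneg (hQ x) (hK.1 x y))
      (fun x hx => by
        rcases mul_eq_zero.mp hx with h | h
        · rw [habs x h, zero_mul]
        · rw [h, mul_zero])
    refine h.trans (le_of_eq ?_)
    apply Finset.sum_congr rfl
    intro x _
    rcases eq_or_lt_of_le (hK.1 x y) with hk | hk
    · rw [← hk, mul_zero, zero_mul, zero_mul]
    · rw [mul_div_mul_right _ _ hk.ne']
  calc ∑ y, (∑ x, P x * K x y) * Real.log ((∑ x, P x * K x y) / (∑ x, Q x * K x y))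
      ≤ ∑ y, ∑ x, (P x * K x y) * Real.log (P x / Q x) :=
        Finset.sum_le_sum (fun y _ => step1 y)
    _ = ∑ x, P x * Real.log (P x / Q x) := by
        rw [Finset.sum_comm]
        apply Finset.sum_congr rfl
        intro x _
        have : ∀ y, (P x * K x y) * Real.log (P x / Q x)
            = (P x * Real.log (P x / Q x)) * K x y := fun y => by ring
        simp_rw [this]
        rw [← Finset.mul_sum, hK.2 x, mul_one]

lemma klDiv_nonneg {X : Type*} [Fintype X] (P Q : X → ℝ)
    (hP : IsProbDist P) (hQ : IsProbDist Q) (habs : ∀ x, Q x = 0 → P x = 0) :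
    0 ≤ klDiv P Q := by
  have h := log_sum_ineq P Q hP.1 hQ.1 habs
  rw [hP.2, hQ.2] at h
  simpa [klDiv] using h

lemma etaKL_key {X Y : Type*} [Fintype X] [Fintype Y] (K : X → Y → ℝ) (hK : IsChannel K)
    (P Q : X → ℝ) (hP : IsProbDist P) (hQ : IsProbDist Q)
    (habs : ∀ x, Q x = 0 → P x = 0) :
    klDiv (pushforward K P) (pushforward K Q) ≤ etaKL K * klDiv P Q := by
  have hbdd : BddAbove {r : ℝ | ∃ P Q : X → ℝ, IsProbDist P ∧ IsProbDist Q ∧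
      (∀ x, Q x = 0 → P x = 0) ∧ 0 < klDiv P Q ∧
      r = klDiv (pushforward K P) (pushforward K Q) / klDiv P Q} := by
    refine ⟨1, fun r hr => ?_⟩
    obtain ⟨P', Q', hP', hQ', habs', hpos', rfl⟩ := hr
    rw [div_le_one hpos']
    exact dpi K hK P' Q' hP'.1 hQ'.1 habs'
  rcases (klDiv_nonneg P Q hP hQ habs).eq_or_lt with h0 | hpos
  · rw [← h0, mul_zero]
    exact (dpi K hK P Q hP.1 hQ.1 habs).trans h0.ge
  · have hmem : klDiv (pushforward K P) (pushforward K Q) / klDiv P Q ∈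
        {r : ℝ | ∃ P Q : X → ℝ, IsProbDist P ∧ IsProbDist Q ∧
        (∀ x, Q x = 0 → P x = 0) ∧ 0 < klDiv P Q ∧
        r = klDiv (pushforward K P) (pushforward K Q) / klDiv P Q} :=
      ⟨P, Q, hP, hQ, habs, hpos, rfl⟩
    have := le_csSup hbdd hmem
    rw [div_le_iff₀ hpos] at this
    rw [mul_comm] at this ⊢
    exact this

/-- Strong data processing inequality: for a Markov chain `U → X → Y` where the
conditional law of `Y` given `X` is the channel `K` (so that the joint law of `(U, Y)`
is `(u, y) ↦ ∑ x, P_{UX}(u, x) K(x, y)`), one has `I(U;Y) ≤ η_KL(K) · I(U;X)`. -/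
theorem sdpi {U X Y : Type*} [Fintype U] [Fintype X] [Fintype Y]
    (K : X → Y → ℝ) (hK : IsChannel K)
    (PUX : U × X → ℝ) (hP : IsProbDist PUX) :
    mutInfo (fun p : U × Y => ∑ x, PUX (p.1, x) * K x p.2) ≤ etaKL K * mutInfo PUX := by
  obtain ⟨hP0, hP1⟩ := hP
  have hPUnn : ∀ u, (0:ℝ) ≤ ∑ x, PUX (u, x) := fun u => Finset.sum_nonneg fun x _ => hP0 _
  have hmX : mutInfo PUX = ∑ u, ∑ x, PUX (u, x) * Real.log (PUX (u, x) /
      ((∑ x', PUX (u, x')) * (∑ u', PUX (u', x)))) := by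
    unfold mutInfo klDiv
    rw [Fintype.sum_prod_type]
  have hm1 : ∀ u : U, (∑ y, ∑ x, PUX (u, x) * K x y) = ∑ x, PUX (u, x) := by
    intro u
    rw [Finset.sum_comm]
    apply Finset.sum_congr rfl
    intro x _
    rw [← Finset.mul_sum, hK.2 x, mul_one]
  have hm2 : ∀ y : Y, (∑ u, ∑ x, PUX (u, x) * K x y) = ∑ x, (∑ u', PUX (u', x)) * K x y := by
    intro y
    rw [Finset.sum_comm]
    apply Finset.sum_congr rfl
    intro x _
    rw [← Finset.sum_mul]
  have hmY : mutInfo (fun p : U × Y => ∑ x, PUX (p.1, x) * K x p.2) =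
      ∑ u, ∑ y, (∑ x, PUX (u, x) * K x y) * Real.log ((∑ x, PUX (u, x) * K x y) /
        ((∑ x, PUX (u, x)) * (∑ x, (∑ u', PUX (u', x)) * K x y))) := by
    unfold mutInfo klDiv
    rw [Fintype.sum_prod_type]
    apply Finset.sum_congr rfl; intro u _
    apply Finset.sum_congr rfl; intro y _
    dsimp only
    rw [hm1 u, hm2 y]
  rw [hmY, hmX, Finset.mul_sum]
  apply Finset.sum_le_sum
  intro u _
  rcases (hPUnn u).eq_or_lt with h0 | hu
  · have hx0 : ∀ x, PUX (u, x) = 0 := fun x =>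
      (Finset.sum_eq_zero_iff_of_nonneg (fun x _ => hP0 _)).mp h0.symm x (Finset.mem_univ x)
    simp [hx0]
  · have hune : (∑ x, PUX (u, x)) ≠ 0 := hu.ne'
    set A := ∑ x, PUX (u, x) with hAdef
    set PX : X → ℝ := fun x => ∑ u', PUX (u', x) with hPXdef
    set Pu : X → ℝ := fun x => PUX (u, x) / A with hPudef
    have hPXd : IsProbDist PX := by
      constructor
      · exact fun x => Finset.sum_nonneg fun u' _ => hP0 _
      · rw [hPXdef]
        rw [Finset.sum_comm]
        rw [← Fintype.sum_prod_type]
        exact hP1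
    have hPud : IsProbDist Pu := by
      constructor
      · exact fun x => div_nonneg (hP0 _) hu.le
      · rw [hPudef]
        rw [← Finset.sum_div, ← hAdef, div_self hune]
    have habs : ∀ x, PX x = 0 → Pu x = 0 := by
      intro x hx
      have : PUX (u, x) = 0 :=
        (Finset.sum_eq_zero_iff_of_nonneg (fun u' _ => hP0 _)).mp hx u (Finset.mem_univ u)
      rw [hPudef]; dsimp only; rw [this, zero_div]
    have key := etaKL_key K hK Pu PX hPud hPXd habs
    have idX : ∑ x, PUX (u, x) * Real.log (PUX (u, x) / (A * PX x)) = A * klDiv Pu PX := by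
      unfold klDiv
      rw [Finset.mul_sum]
      apply Finset.sum_congr rfl
      intro x _
      have h1 : A * (PUX (u, x) / A) = PUX (u, x) := by field_simp
      rw [hPudef]; dsimp only
      rw [div_div, mul_comm A (PX x), ← mul_assoc, h1, mul_comm (PX x) A]
    have hpushPu : ∀ y, pushforward K Pu y = (∑ x, PUX (u, x) * K x y) / A := by
      intro y
      unfold pushforward
      rw [Finset.sum_div]
      apply Finset.sum_congr rfl
      intro x _
      rw [hPudef]; dsimp only
      rw [div_mul_eq_mul_div]
    have idY : ∑ y, (∑ x, PUX (u, x) * K x y) * Real.log ((∑ x, PUX (u, x) * K x y) /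
        (A * (∑ x, PX x * K x y))) = A * klDiv (pushforward K Pu) (pushforward K PX) := by
      unfold klDiv
      rw [Finset.mul_sum]
      apply Finset.sum_congr rfl
      intro y _
      rw [hpushPu y]
      have hpp : pushforward K PX y = ∑ x, PX x * K x y := rfl
      rw [hpp]
      have h1 : A * ((∑ x, PUX (u, x) * K x y) / A) = ∑ x, PUX (u, x) * K x y := by field_simp
      rw [div_div, mul_comm A (∑ x, PX x * K x y), ← mul_assoc, h1,
        mul_comm (∑ x, PX x * K x y) A]
    rw [idY, idX]
    calc A * klDiv (pushforward K Pu) (pushforward K PX)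
        ≤ A * (etaKL K * klDiv Pu PX) := mul_le_mul_of_nonneg_left key hu.le
      _ = etaKL K * (A * klDiv Pu PX) := by ring
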